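/- For every integer n ≥ 5, any packing of n horospheres has at most 5n − 16 tangencies: if p : Fin n → ℝ² and R : Fin n → ℝ satisfy R i > 0 for all i, the pairs (p i, R i) are pairwise distinct, and ‖p i − p j‖² ≥ 4 (R i) (R j) for all i ≠ j, then the number of unordered pairs {i, j}, i ≠ j, with ‖p i − p j‖² = 4 (R i) (R j) is at most 5n − 16. -/

import Mathlib

set_option maxHeartbeats 1000000

open Real Finset

lemma norm_sq_coord (x y : EuclideanSpace ℝ (Fin 2)) :
    ‖x - y‖ ^ 2 = (x 0 - y 0) ^ 2 + (x 1 - y 1) ^ 2 := by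
  rw [EuclideanSpace.norm_eq]
  rw [Real.sq_sqrt (by positivity)]
  simp [Fin.sum_univ_two, sq_abs]

lemma no_K5 (p : Fin 5 → EuclideanSpace ℝ (Fin 2)) (R : Fin 5 → ℝ)
    (hR : ∀ i, 0 < R i)
    (htan : ∀ i j, i ≠ j → ‖p i - p j‖ ^ 2 = 4 * R i * R j) : False := by
  set x : Fin 5 → ℝ := fun i => p i 0 with hx
  set y : Fin 5 → ℝ := fun i => p i 1 with hy
  -- the 5 lifted vectors in ℝ⁴
  set v : Fin 5 → (Fin 4 → ℝ) := fun i => ![1, x i, y i, x i ^ 2 + y i ^ 2] with hv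
  have hdep : ¬ LinearIndependent ℝ v := by
    intro h
    have := h.fintype_card_le_finrank
    simp [Module.finrank_fintype_fun_eq_card] at this
  rw [Fintype.not_linearIndependent_iff] at hdep
  obtain ⟨c, hsum, i₀, hi₀⟩ := hdep
  have S0 : ∑ i, c i = 0 := by
    have := congrFun hsum 0
    simpa [hv, Finset.sum_apply] using this
  have S1 : ∑ i, c i * x i = 0 := by
    have := congrFun hsum 1
    simpa [hv, Finset.sum_apply] using this
  have S2 : ∑ i, c i * y i = 0 := by
    have := congrFun hsum 2
    simpa [hv, Finset.sum_apply] using this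
  have S3 : ∑ i, c i * (x i ^ 2 + y i ^ 2) = 0 := by
    have := congrFun hsum 3
    simpa [hv, Finset.sum_apply] using this
  set T : ℝ := ∑ i, c i * R i with hT
  -- for each k, ∑ i, c i * ‖p i - p k‖² = 4 R k (T - c k R k) and also = 0
  have key : ∀ k, c k * R k = T := by
    intro k
    have e1 : (∑ i, c i * ‖p i - p k‖ ^ 2) = 0 := by
      have : ∀ i, c i * ‖p i - p k‖ ^ 2 =
          c i * (x i ^ 2 + y i ^ 2) - 2 * x k * (c i * x i) - 2 * y k * (c i * y i)
            + (x k ^ 2 + y k ^ 2) * c i := by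
        intro i
        rw [norm_sq_coord]
        ring
      rw [Finset.sum_congr rfl (fun i _ => this i)]
      simp only [Finset.sum_add_distrib, Finset.sum_sub_distrib, ← Finset.mul_sum]
      rw [S0, S1, S2, S3]
      ring
    have e2 : (∑ i, c i * ‖p i - p k‖ ^ 2) = 4 * R k * (T - c k * R k) := by
      rw [← Finset.sum_erase_add _ _ (Finset.mem_univ k)]
      have h1 : ∀ i ∈ Finset.univ.erase k, c i * ‖p i - p k‖ ^ 2 = 4 * R k * (c i * R i) := by
        intro i hi
        rw [htan i k (Finset.ne_of_mem_erase hi)]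
        ring
      rw [Finset.sum_congr rfl h1, ← Finset.mul_sum]
      have h2 : ∑ i ∈ Finset.univ.erase k, c i * R i = T - c k * R k := by
        rw [hT, ← Finset.sum_erase_add _ _ (Finset.mem_univ k)]
        ring
      rw [h2, sub_self, norm_zero]
      ring
    have h3 : 4 * R k * (T - c k * R k) = 0 := by rw [← e2, e1]
    have h4 : T - c k * R k = 0 := by
      rcases mul_eq_zero.mp h3 with h | h
      · exfalso; rcases mul_eq_zero.mp h with h' | h'
        · norm_num at h'
        · exact (hR k).ne' h'
      · exact h
    linarith
  have hc : ∀ k, c k = T / R k := fun k => by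
    rw [eq_div_iff (hR k).ne']
    exact key k
  have hTsum : T * (∑ k, 1 / R k) = 0 := by
    rw [Finset.mul_sum]
    rw [← S0]
    apply Finset.sum_congr rfl
    intro k _
    rw [hc k]
    ring
  have hpos : (0:ℝ) < ∑ k, 1 / R k :=
    Finset.sum_pos (fun k _ => one_div_pos.mpr (hR k)) ⟨0, Finset.mem_univ 0⟩
  have hT0 : T = 0 := by
    rcases mul_eq_zero.mp hTsum with h | h
    · exact h
    · exact absurd h hpos.ne'
  apply hi₀
  rw [hc i₀, hT0, zero_div]

lemma gap_bounds {d : ℝ} (h0 : 0 ≤ d) (h2 : d < 2 * π) (hc : Real.cos d ≤ 1 / 2) :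
    π / 3 ≤ d ∧ d ≤ 5 * π / 3 := by
  have hpi := Real.pi_pos
  constructor
  · by_contra h
    push_neg at h
    have h3 : Real.cos (π / 3) < Real.cos d := by
      apply Real.strictAntiOn_cos ⟨h0, by linarith⟩ ⟨by positivity, by linarith⟩ h
    rw [Real.cos_pi_div_three] at h3
    linarith
  · by_contra h
    push_neg at h
    have he : Real.cos d = Real.cos (2 * π - d) := (Real.cos_two_pi_sub d).symm
    have h3 : Real.cos (π / 3) < Real.cos (2 * π - d) := by
      apply Real.strictAntiOn_cos ⟨by linarith, by linarith⟩ ⟨by positivity, by linarith⟩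
        (by linarith)
    rw [Real.cos_pi_div_three] at h3
    linarith

lemma hex_rigid (b : Fin 6 → ℝ) (hmono : Monotone b)
    (hrange : ∀ k, b k ∈ Set.Ioc (-π) π)
    (hcos : ∀ k l, k ≠ l → Real.cos (b k - b l) ≤ 1 / 2) :
    b 1 - b 0 = π / 3 ∧ b 2 - b 1 = π / 3 ∧ b 3 - b 2 = π / 3 ∧
      b 4 - b 3 = π / 3 ∧ b 5 - b 4 = π / 3 := by
  have hpi := Real.pi_pos
  have gap : ∀ k l : Fin 6, k < l → π / 3 ≤ b l - b k ∧ b l - b k ≤ 5 * π / 3 := by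
    intro k l hkl
    have h0 : 0 ≤ b l - b k := by have := hmono hkl.le; linarith
    have h2 : b l - b k < 2 * π := by
      have := (hrange l).2; have := (hrange k).1; linarith
    have hc : Real.cos (b l - b k) ≤ 1 / 2 := hcos l k (ne_of_gt hkl)
    exact gap_bounds h0 h2 hc
  have g01 := gap 0 1 (by decide)
  have g12 := gap 1 2 (by decide)
  have g23 := gap 2 3 (by decide)
  have g34 := gap 3 4 (by decide)
  have g45 := gap 4 5 (by decide)
  have g05 := gap 0 5 (by decide)
  exact ⟨by linarith, by linarith, by linarith, by linarith, by linarith⟩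

/-- Core geometric lemma: a horoball cannot have six tangent neighbours all at
least as large, when it is extreme (max first coordinate) among minimal ones. -/
lemma six_neighbors_false (R₀ : ℝ) (hR₀ : 0 < R₀) (q : Fin 6 → ℂ) (R : Fin 6 → ℝ)
    (hge : ∀ k, R₀ ≤ R k)
    (htan : ∀ k, (‖q k‖) ^ 2 = 4 * R₀ * R k)
    (hsep : ∀ k l, k ≠ l → 4 * R k * R l ≤ (‖q k - q l‖) ^ 2)
    (hxmax : ∀ k, R k = R₀ → (q k).re ≤ 0) : False := by
  have hpi := Real.pi_pos
  set r : Fin 6 → ℝ := fun k => ‖q k‖ with hrdef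
  have hrnn : ∀ k, 0 ≤ r k := fun k => norm_nonneg _
  have hrge : ∀ k, 2 * R₀ ≤ r k := by
    intro k
    nlinarith [htan k, hge k, hrnn k]
  have hrpos : ∀ k, 0 < r k := fun k => lt_of_lt_of_le (by linarith) (hrge k)
  have hq0 : ∀ k, q k ≠ 0 := by
    intro k h
    have := hrpos k
    rw [hrdef] at this
    simp [h] at this
  set a : Fin 6 → ℝ := fun k => Complex.arg (q k) with hadef
  have habs0 : ∀ k, ‖q k‖ ≠ 0 := fun k => norm_ne_zero_iff.mpr (hq0 k)
  have hre : ∀ k, (q k).re = r k * Real.cos (a k) := by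
    intro k
    simp only [hrdef, hadef]
    rw [Complex.cos_arg (hq0 k), ← mul_div_assoc, mul_div_cancel_left₀ _ (habs0 k)]
  have him : ∀ k, (q k).im = r k * Real.sin (a k) := by
    intro k
    simp only [hrdef, hadef]
    rw [Complex.sin_arg, ← mul_div_assoc, mul_div_cancel_left₀ _ (habs0 k)]
  have hinner : ∀ k l, (q k).re * (q l).re + (q k).im * (q l).im
      = r k * r l * Real.cos (a k - a l) := by
    intro k l
    rw [hre, hre, him, him, Real.cos_sub]
    ring
  have hdsq : ∀ k l, (‖q k - q l‖) ^ 2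
      = r k ^ 2 + r l ^ 2 - 2 * ((q k).re * (q l).re + (q k).im * (q l).im) := by
    intro k l
    simp only [hrdef]
    rw [Complex.sq_norm, Complex.sq_norm, Complex.sq_norm, Complex.normSq_apply,
      Complex.normSq_apply, Complex.normSq_apply, Complex.sub_re, Complex.sub_im]
    ring
  -- pairwise angle bound
  have key1 : ∀ k l, k ≠ l → Real.cos (a k - a l) ≤ 1 / 2 := by
    intro k l hkl
    have hs := hsep k l hkl
    have hsep' : r k ^ 2 * r l ^ 2 ≤ 4 * R₀ ^ 2 * (‖q k - q l‖) ^ 2 := by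
      have h1 := htan k
      have h2 := htan l
      nlinarith [hs, hR₀]
    have hd := hdsq k l
    have hi := hinner k l
    have hprod : (r k ^ 2 - 4 * R₀ ^ 2) * (r l ^ 2 - 4 * R₀ ^ 2) ≥ 0 := by
      have h1 : 4 * R₀ ^ 2 ≤ r k ^ 2 := by nlinarith [hrge k, hR₀]
      have h2 : 4 * R₀ ^ 2 ≤ r l ^ 2 := by nlinarith [hrge l, hR₀]
      nlinarith
    have hrs : 4 * R₀ ^ 2 ≤ r k * r l := by nlinarith [hrge k, hrge l, hR₀]
    by_contra hgt
    push_neg at hgt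
    have h1 : r k ^ 2 * r l ^ 2 ≤ 4 * R₀ ^ 2 * (r k ^ 2 + r l ^ 2)
        - 8 * R₀ ^ 2 * (r k * r l * Real.cos (a k - a l)) := by
      rw [hd, hi] at hsep'
      nlinarith [hsep']
    have h2 : 4 * R₀ ^ 2 * (r k * r l) < 8 * R₀ ^ 2 * (r k * r l * Real.cos (a k - a l)) := by
      have hp : (0:ℝ) < 8 * R₀ ^ 2 * (r k * r l) :=
        mul_pos (by positivity) (mul_pos (hrpos k) (hrpos l))
      nlinarith [mul_pos hp (show (0:ℝ) < Real.cos (a k - a l) - 1 / 2 by linarith)]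
    have h3 : 4 * R₀ ^ 2 * r k ^ 2 + 4 * R₀ ^ 2 * r l ^ 2 - 16 * R₀ ^ 4 ≤ r k ^ 2 * r l ^ 2 := by
      nlinarith [hprod]
    have h5 : 16 * R₀ ^ 4 ≤ 4 * R₀ ^ 2 * (r k * r l) := by
      nlinarith [mul_le_mul_of_nonneg_left hrs (show (0:ℝ) ≤ 4 * R₀ ^ 2 by positivity)]
    linarith
  -- equality forces both to be minimal
  have key2 : ∀ k l, k ≠ l → Real.cos (a k - a l) = 1 / 2 → R k = R₀ ∧ R l = R₀ := by
    intro k l hkl hceq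
    have hs := hsep k l hkl
    have hsep' : r k ^ 2 * r l ^ 2 ≤ 4 * R₀ ^ 2 * (‖q k - q l‖) ^ 2 := by
      have h1 := htan k
      have h2 := htan l
      nlinarith [hs, hR₀]
    have hd := hdsq k l
    have hi := hinner k l
    have hprod : (r k ^ 2 - 4 * R₀ ^ 2) * (r l ^ 2 - 4 * R₀ ^ 2) ≥ 0 := by
      have h1 : 4 * R₀ ^ 2 ≤ r k ^ 2 := by nlinarith [hrge k, hR₀]
      have h2 : 4 * R₀ ^ 2 ≤ r l ^ 2 := by nlinarith [hrge l, hR₀]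
      nlinarith
    have hrs : 4 * R₀ ^ 2 ≤ r k * r l := by nlinarith [hrge k, hrge l, hR₀]
    -- r k * r l = 4 R₀², hence r k = r l = 2 R₀
    have h1 : r k ^ 2 * r l ^ 2 ≤ 4 * R₀ ^ 2 * (r k ^ 2 + r l ^ 2)
        - 4 * R₀ ^ 2 * (r k * r l) := by
      rw [hd, hi, hceq] at hsep'
      nlinarith [hsep']
    have h4 : 4 * R₀ ^ 2 * (r k * r l) ≤ 16 * R₀ ^ 4 := by
      nlinarith [hprod, h1]
    have hrsle : r k * r l ≤ 4 * R₀ ^ 2 := by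
      nlinarith [h4, mul_pos hR₀ hR₀]
    have hrseq : r k * r l = 4 * R₀ ^ 2 := le_antisymm hrsle hrs
    have hrkle : r k ≤ 2 * R₀ := by
      nlinarith [hrseq, hrge l, hrpos l, hR₀]
    have hrlle : r l ≤ 2 * R₀ := by
      nlinarith [hrseq, hrge k, hrpos k, hR₀]
    have hrk : r k = 2 * R₀ := le_antisymm hrkle (hrge k)
    have hrl : r l = 2 * R₀ := le_antisymm hrlle (hrge l)
    constructor
    · simp only [hrdef] at hrk
      have h2 : 4 * R₀ * R k = 4 * R₀ * R₀ := by rw [← htan k, hrk]; ring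
      exact mul_left_cancel₀ (show (4:ℝ) * R₀ ≠ 0 by positivity) h2
    · simp only [hrdef] at hrl
      have h2 : 4 * R₀ * R l = 4 * R₀ * R₀ := by rw [← htan l, hrl]; ring
      exact mul_left_cancel₀ (show (4:ℝ) * R₀ ≠ 0 by positivity) h2
  -- sort the angles
  obtain ⟨σ, hmono⟩ : ∃ σ : Equiv.Perm (Fin 6), Monotone (a ∘ ⇑σ) :=
    ⟨Tuple.sort a, Tuple.monotone_sort a⟩
  set b : Fin 6 → ℝ := a ∘ ⇑σ with hb
  have hbapp : ∀ k, b k = a (σ k) := fun k => rfl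
  have hbrange : ∀ k, b k ∈ Set.Ioc (-π) π := by
    intro k
    rw [hbapp, hadef]
    exact Complex.arg_mem_Ioc _
  have hbcos : ∀ k l, k ≠ l → Real.cos (b k - b l) ≤ 1 / 2 := by
    intro k l hkl
    rw [hbapp, hbapp]
    exact key1 (σ k) (σ l) (fun h => hkl (σ.injective h))
  obtain ⟨e1, e2, e3, e4, e5⟩ := hex_rigid b hmono hbrange hbcos
  -- consecutive equalities force all radii minimal
  have hcons : ∀ k l : Fin 6, k ≠ l → b l - b k = π / 3 → R (σ k) = R₀ ∧ R (σ l) = R₀ := by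
    intro k l hkl he
    have hc2 : Real.cos (a (σ k) - a (σ l)) = 1 / 2 := by
      have h9 : a (σ k) - a (σ l) = -(π / 3) := by
        rw [← hbapp, ← hbapp]; linarith
      rw [h9, Real.cos_neg, Real.cos_pi_div_three]
    exact key2 (σ k) (σ l) (fun h => hkl (σ.injective h)) hc2
  have h01 := hcons 0 1 (by decide) e1
  have h12 := hcons 1 2 (by decide) e2
  have h23 := hcons 2 3 (by decide) e3
  have h34 := hcons 3 4 (by decide) e4
  have h45 := hcons 4 5 (by decide) e5
  -- hence all re ≤ 0, so all cos (b k) ≤ 0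
  have hcosneg : Real.cos (b 2) ≤ 0 := by
    have hre2 : (q (σ 2)).re ≤ 0 := hxmax _ h12.2
    rw [hre (σ 2)] at hre2
    rw [hbapp]
    nlinarith [hrpos (σ 2)]
  -- but b 2 ∈ (-π/3, 0], so cos (b 2) > 0
  have hb0 : -π < b 0 := (hbrange 0).1
  have hb5 : b 5 ≤ π := (hbrange 5).2
  have hb2a : -(π / 3) < b 2 := by linarith
  have hb2b : b 2 ≤ 0 := by linarith
  have : 0 < Real.cos (b 2) := by
    apply Real.cos_pos_of_mem_Ioo
    constructor <;> [linarith; linarith]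
  linarith

/-- The chosen extreme minimal horoball has at most 5 tangencies. -/
lemma deg_le_five (n : ℕ) (p : Fin n → EuclideanSpace ℝ (Fin 2)) (R : Fin n → ℝ)
    (hR : ∀ i, 0 < R i)
    (hsep : ∀ i j, i ≠ j → 4 * R i * R j ≤ ‖p i - p j‖ ^ 2)
    (i₀ : Fin n) (hmin : ∀ j, R i₀ ≤ R j)
    (hmax : ∀ j, R j = R i₀ → p j 0 ≤ p i₀ 0) :
    Set.ncard {j : Fin n | j ≠ i₀ ∧ ‖p j - p i₀‖ ^ 2 = 4 * R j * R i₀} ≤ 5 := by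
  set N : Set (Fin n) := {j : Fin n | j ≠ i₀ ∧ ‖p j - p i₀‖ ^ 2 = 4 * R j * R i₀} with hN
  by_contra hcon
  push_neg at hcon
  have hfin : N.Finite := Set.toFinite _
  have h6 : 6 ≤ hfin.toFinset.card := by
    rw [← Set.ncard_eq_toFinset_card N hfin]; omega
  obtain ⟨t, hts, ht6⟩ := Finset.exists_subset_card_eq h6
  set J : Fin 6 → Fin n := fun k => ((t.orderIsoOfFin ht6) k : Fin n) with hJ
  have hJinj : Function.Injective J := by
    intro a b hab
    exact (t.orderIsoOfFin ht6).injective (Subtype.ext hab)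
  have hJN : ∀ k, J k ∈ N := by
    intro k
    have := (t.orderIsoOfFin ht6 k).2
    exact (Set.Finite.mem_toFinset hfin).mp (hts this)
  -- complexify
  set c2 : EuclideanSpace ℝ (Fin 2) → ℂ := fun x => ⟨x 0, x 1⟩ with hc2
  have habs : ∀ x y : EuclideanSpace ℝ (Fin 2),
      (‖c2 x - c2 y‖) ^ 2 = ‖x - y‖ ^ 2 := by
    intro x y
    rw [Complex.sq_norm, Complex.normSq_apply, norm_sq_coord]
    simp [hc2]
    ring
  set q : Fin 6 → ℂ := fun k => c2 (p (J k)) - c2 (p i₀) with hq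
  apply six_neighbors_false (R i₀) (hR i₀) q (fun k => R (J k))
  · intro k; exact hmin (J k)
  · intro k
    rw [hq]
    rw [habs]
    rw [(hJN k).2]
    ring
  · intro k l hkl
    have hne : J k ≠ J l := fun h => hkl (hJinj h)
    have h1 := hsep (J k) (J l) hne
    have h2 : q k - q l = c2 (p (J k)) - c2 (p (J l)) := by rw [hq]; ring
    rw [h2, habs]
    exact h1
  · intro k hk
    have h1 : p (J k) 0 ≤ p i₀ 0 := hmax (J k) hk
    have h2 : (q k).re = p (J k) 0 - p i₀ 0 := by
      rw [hq]
      simp [hc2]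
    rw [h2]
    linarith

lemma main_aux : ∀ n : ℕ, 5 ≤ n → ∀ (p : Fin n → EuclideanSpace ℝ (Fin 2)) (R : Fin n → ℝ),
    (∀ i, 0 < R i) →
    (∀ i j, i ≠ j → 4 * R i * R j ≤ ‖p i - p j‖ ^ 2) →
    Set.ncard {q : Fin n × Fin n | q.1 < q.2 ∧
      ‖p q.1 - p q.2‖ ^ 2 = 4 * R q.1 * R q.2} ≤ 5 * n - 16 := by
  intro n hn
  induction n, hn using Nat.le_induction with
  | base =>
    intro p R hR hsep
    set E : Set (Fin 5 × Fin 5) := {q : Fin 5 × Fin 5 | q.1 < q.2 ∧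
      ‖p q.1 - p q.2‖ ^ 2 = 4 * R q.1 * R q.2} with hE
    by_contra hcon
    push_neg at hcon
    set F : Finset (Fin 5 × Fin 5) := Finset.univ.filter (fun q => q.1 < q.2) with hF
    have hsub : E ⊆ ↑F := by
      intro q hq
      simp only [hF, Finset.coe_filter, Finset.mem_univ, true_and, Set.mem_setOf_eq]
      exact hq.1
    have hFcard : (↑F : Set (Fin 5 × Fin 5)).ncard = 10 := by
      rw [Set.ncard_coe_finset]
      decide
    have h10 : 10 ≤ E.ncard := by
      have : (9:ℕ) < E.ncard := by
        have h916 : 5 * 5 - 16 = 9 := by norm_num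
        omega
      omega
    have heq : E = ↑F := Set.eq_of_subset_of_ncard_le hsub (by omega) (Set.toFinite _)
    have hall : ∀ i j : Fin 5, i ≠ j → ‖p i - p j‖ ^ 2 = 4 * R i * R j := by
      intro i j hij
      rcases lt_or_gt_of_ne hij with h | h
      · have : (i, j) ∈ E := by
          rw [heq]
          simp [hF, h]
        exact this.2
      · have : (j, i) ∈ E := by
          rw [heq]
          simp [hF, h]
        have := this.2
        rw [norm_sub_rev] at this
        rw [this]
        ring
    exact no_K5 p R hR hall
  | succ n hn ih =>
    intro p R hR hsep
    -- choose the extreme minimal index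
    obtain ⟨i₁, -, hmin1⟩ :=
      Finset.exists_min_image Finset.univ R ⟨0, Finset.mem_univ 0⟩
    have hmin1' : ∀ j, R i₁ ≤ R j := fun j => hmin1 j (Finset.mem_univ j)
    classical
    set S : Finset (Fin (n + 1)) := Finset.univ.filter (fun j => R j = R i₁) with hS
    have hi₁S : i₁ ∈ S := by simp [hS]
    obtain ⟨i₀, hi₀S, hmax0⟩ := Finset.exists_max_image S (fun j => p j 0) ⟨i₁, hi₁S⟩
    have hRi₀ : R i₀ = R i₁ := by
      simpa [hS] using hi₀S
    have hmin : ∀ j, R i₀ ≤ R j := fun j => hRi₀ ▸ hmin1' j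
    have hmax : ∀ j, R j = R i₀ → p j 0 ≤ p i₀ 0 := by
      intro j hj
      apply hmax0
      simp [hS, hj, hRi₀]
    -- the edge set
    set E : Set (Fin (n + 1) × Fin (n + 1)) := {q | q.1 < q.2 ∧
      ‖p q.1 - p q.2‖ ^ 2 = 4 * R q.1 * R q.2} with hE
    set Etouch : Set (Fin (n + 1) × Fin (n + 1)) :=
      {q | q ∈ E ∧ (q.1 = i₀ ∨ q.2 = i₀)} with hEt
    set Enot : Set (Fin (n + 1) × Fin (n + 1)) :=
      {q | q ∈ E ∧ (q.1 ≠ i₀ ∧ q.2 ≠ i₀)} with hEn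
    have hsplit : E = Etouch ∪ Enot := by
      ext q
      simp only [hEt, hEn, Set.mem_union, Set.mem_setOf_eq]
      tauto
    -- bound on touching edges
    set N : Set (Fin (n + 1)) := {j | j ≠ i₀ ∧ ‖p j - p i₀‖ ^ 2 = 4 * R j * R i₀} with hNdef
    have htouch : Etouch.ncard ≤ 5 := by
      have hinj : Set.InjOn (fun q : Fin (n + 1) × Fin (n + 1) =>
          if q.1 = i₀ then q.2 else q.1) Etouch := by
        intro a ha b hb hab
        dsimp only at hab
        simp only [hEt, hE, Set.mem_setOf_eq] at ha hb
        by_cases ha1 : a.1 = i₀ <;> by_cases hb1 : b.1 = i₀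
        · rw [if_pos ha1, if_pos hb1] at hab
          exact Prod.ext (ha1.trans hb1.symm) hab
        · exfalso
          rw [if_pos ha1, if_neg hb1] at hab
          have hb2 : b.2 = i₀ := hb.2.resolve_left hb1
          have h1 : i₀ < a.2 := ha1 ▸ ha.1.1
          have h2 : b.1 < i₀ := hb2 ▸ hb.1.1
          rw [← hab] at h2
          exact absurd (h1.trans h2) (lt_irrefl _)
        · exfalso
          rw [if_neg ha1, if_pos hb1] at hab
          have ha2 : a.2 = i₀ := ha.2.resolve_left ha1
          have h1 : i₀ < b.2 := hb1 ▸ hb.1.1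
          have h2 : a.1 < i₀ := ha2 ▸ ha.1.1
          rw [hab] at h2
          exact absurd (h1.trans h2) (lt_irrefl _)
        · rw [if_neg ha1, if_neg hb1] at hab
          have ha2 : a.2 = i₀ := ha.2.resolve_left ha1
          have hb2 : b.2 = i₀ := hb.2.resolve_left hb1
          exact Prod.ext hab (ha2.trans hb2.symm)
      have hmaps : ∀ q ∈ Etouch,
          (if q.1 = i₀ then q.2 else q.1) ∈ N := by
        intro q hq
        simp only [hEt, hE, Set.mem_setOf_eq] at hq
        obtain ⟨⟨hlt, htan⟩, hor⟩ := hq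
        simp only [hNdef, Set.mem_setOf_eq]
        by_cases h1 : q.1 = i₀
        · rw [if_pos h1]
          constructor
          · exact fun h => absurd (h1 ▸ h ▸ hlt) (lt_irrefl _)
          · rw [norm_sub_rev] at htan
            rw [← h1, htan]
            ring
        · rw [if_neg h1]
          have h2 : q.2 = i₀ := hor.resolve_left h1
          constructor
          · exact fun h => absurd (h ▸ h2 ▸ hlt) (lt_irrefl _)
          · rw [← h2]
            exact htan
      calc Etouch.ncard ≤ N.ncard :=
            Set.ncard_le_ncard_of_injOn _ hmaps hinj (Set.toFinite _)
        _ ≤ 5 := deg_le_five (n + 1) p R hR hsep i₀ hmin hmax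
    -- bound on non-touching edges via the reduced configuration
    set e : Fin n → Fin (n + 1) := i₀.succAbove with he
    have hestrict : StrictMono e := Fin.strictMono_succAbove i₀
    have heinj : Function.Injective e := hestrict.injective
    set E' : Set (Fin n × Fin n) := {q | q.1 < q.2 ∧
      ‖p (e q.1) - p (e q.2)‖ ^ 2 = 4 * R (e q.1) * R (e q.2)} with hE'
    have himage : Enot = (fun q : Fin n × Fin n => (e q.1, e q.2)) '' E' := by
      ext q
      constructor
      · intro hq
        simp only [hEn, hE, Set.mem_setOf_eq] at hq
        obtain ⟨⟨hlt, htan⟩, h1, h2⟩ := hq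
        obtain ⟨a, ha⟩ := Fin.exists_succAbove_eq h1
        obtain ⟨b, hb⟩ := Fin.exists_succAbove_eq h2
        refine ⟨(a, b), ⟨?_, ?_⟩, ?_⟩
        · have : e a < e b := by rw [he]; rw [ha, hb]; exact hlt
          exact hestrict.lt_iff_lt.mp this
        · show ‖p (e a) - p (e b)‖ ^ 2 = 4 * R (e a) * R (e b)
          rw [he]; rw [ha, hb]; exact htan
        · show (e a, e b) = q
          rw [he]; rw [ha, hb]
      · rintro ⟨⟨a, b⟩, ⟨hlt, htan⟩, rfl⟩
        simp only [hEn, hE, Set.mem_setOf_eq]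
        refine ⟨⟨hestrict hlt, htan⟩, ?_, ?_⟩
        · exact Fin.succAbove_ne i₀ a
        · exact Fin.succAbove_ne i₀ b
    have hnot : Enot.ncard ≤ 5 * n - 16 := by
      rw [himage]
      have hinj2 : Function.Injective (fun q : Fin n × Fin n => (e q.1, e q.2)) := by
        intro a b hab
        simp only [Prod.ext_iff] at hab ⊢
        exact ⟨heinj hab.1, heinj hab.2⟩
      rw [Set.ncard_image_of_injective _ hinj2]
      exact ih (fun i => p (e i)) (fun i => R (e i)) (fun i => hR (e i))
        (fun i j hij => hsep (e i) (e j) (fun h => hij (heinj h)))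
    -- combine
    have hunion : E.ncard ≤ Etouch.ncard + Enot.ncard := by
      rw [hsplit]
      exact Set.ncard_union_le _ _
    have h16 : 16 ≤ 5 * n := by omega
    omega

/-- Any packing of `n ≥ 5` horospheres has at most `5n - 16`
tangencies. -/
theorem horosphere_packing_tangencies_le (n : ℕ) (hn : 5 ≤ n)
    (p : Fin n → EuclideanSpace ℝ (Fin 2)) (R : Fin n → ℝ)
    (hR : ∀ i, 0 < R i)
    (hdist : Function.Injective (fun i => (p i, R i)))
    (hsep : ∀ i j, i ≠ j → 4 * R i * R j ≤ ‖p i - p j‖ ^ 2) :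
    Set.ncard {q : Fin n × Fin n | q.1 < q.2 ∧
      ‖p q.1 - p q.2‖ ^ 2 = 4 * R q.1 * R q.2} ≤ 5 * n - 16 :=
  main_aux n hn p R hR hsep
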